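/- Under the same projection setup, if both span(K(σ)^{-1} B(σ)) ⊆ span(V) and span(K(σ)^{-H} C(σ)^H) ⊆ span(W) hold, and K, B, C are differentiable at σ, then in addition to H(σ) = Ĥ(σ), the derivatives match: H'(σ) = Ĥ'(σ). -/

import Mathlib

open Matrix

attribute [local instance] Matrix.linftyOpNormedAddCommGroup Matrix.linftyOpNormedSpace Matrix.linftyOpNormedRing
  Matrix.linftyOpNormedAlgebra

private lemma entry_hasDerivAt {a b : ℕ} {F : ℂ → Matrix (Fin a) (Fin b) ℂ}
    {F' : Matrix (Fin a) (Fin b) ℂ} {σ : ℂ} (h : HasDerivAt F F' σ) (i : Fin a) (j : Fin b) :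
    HasDerivAt (fun s => F s i j) (F' i j) σ := by
  let l : Matrix (Fin a) (Fin b) ℂ →ₗ[ℂ] ℂ :=
    { toFun := fun A => A i j, map_add' := fun _ _ => rfl, map_smul' := fun _ _ => rfl }
  exact (l.toContinuousLinearMap.hasFDerivAt.comp_hasDerivAt σ h)

private lemma hasDerivAt_matrix {a b : ℕ} {F : ℂ → Matrix (Fin a) (Fin b) ℂ}
    {F' : Matrix (Fin a) (Fin b) ℂ} {σ : ℂ}
    (h : ∀ i j, HasDerivAt (fun s => F s i j) (F' i j) σ) : HasDerivAt F F' σ := by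
  have e : ∀ (M : Matrix (Fin a) (Fin b) ℂ),
      M = ∑ i : Fin a, ∑ j : Fin b, (M i j) • Matrix.single i j (1 : ℂ) := by
    intro M
    simpa [Matrix.smul_single] using Matrix.matrix_eq_sum_single M
  have key : HasDerivAt
      (fun s => ∑ i : Fin a, ∑ j : Fin b, (F s i j) • Matrix.single i j (1 : ℂ))
      (∑ i : Fin a, ∑ j : Fin b, (F' i j) • Matrix.single i j (1 : ℂ)) σ :=
    HasDerivAt.fun_sum fun i _ => HasDerivAt.fun_sum fun j _ => (h i j).smul_const _
  have eF : F = fun s => ∑ i : Fin a, ∑ j : Fin b, (F s i j) • Matrix.single i j (1 : ℂ) := by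
    funext s; exact e (F s)
  rw [eF, e F']
  exact key

private lemma mul_entry_hasDerivAt {a b c : ℕ} {F : ℂ → Matrix (Fin a) (Fin b) ℂ}
    {G : ℂ → Matrix (Fin b) (Fin c) ℂ} {F' : Matrix (Fin a) (Fin b) ℂ}
    {G' : Matrix (Fin b) (Fin c) ℂ} {σ : ℂ}
    (hF : ∀ i j, HasDerivAt (fun s => F s i j) (F' i j) σ)
    (hG : ∀ i j, HasDerivAt (fun s => G s i j) (G' i j) σ) :
    ∀ i j, HasDerivAt (fun s => (F s * G s) i j) ((F' * G σ + F σ * G') i j) σ := by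
  intro i j
  have key : HasDerivAt (fun s => ∑ k : Fin b, F s i k * G s k j)
      (∑ k : Fin b, (F' i k * G σ k j + F σ i k * G' k j)) σ :=
    HasDerivAt.fun_sum fun k _ => (hF i k).mul (hG k j)
  simp only [Matrix.mul_apply, Matrix.add_apply]
  simpa [Finset.sum_add_distrib] using key

theorem structured_interpolation_hermite
    {n m p r : ℕ}
    (K : ℂ → Matrix (Fin n) (Fin n) ℂ)
    (B : ℂ → Matrix (Fin n) (Fin m) ℂ)
    (C : ℂ → Matrix (Fin p) (Fin n) ℂ)
    (σ : ℂ)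
    (V W : Matrix (Fin n) (Fin r) ℂ)
    (hK : IsUnit (K σ))
    (hKr : IsUnit (Wᴴ * K σ * V))
    (hKd : ∀ i j, DifferentiableAt ℂ (fun s => K s i j) σ)
    (hBd : ∀ i j, DifferentiableAt ℂ (fun s => B s i j) σ)
    (hCd : ∀ i j, DifferentiableAt ℂ (fun s => C s i j) σ)
    (hspanV : ∃ X : Matrix (Fin r) (Fin m) ℂ, (K σ)⁻¹ * B σ = V * X)
    (hspanW : ∃ Y : Matrix (Fin r) (Fin p) ℂ, ((K σ)ᴴ)⁻¹ * (C σ)ᴴ = W * Y) :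
    (C σ * (K σ)⁻¹ * B σ = C σ * V * (Wᴴ * K σ * V)⁻¹ * Wᴴ * B σ) ∧
      (∀ i j,
        deriv (fun s => (C s * (K s)⁻¹ * B s) i j) σ =
          deriv (fun s => (C s * V * (Wᴴ * K s * V)⁻¹ * Wᴴ * B s) i j) σ) := by
  obtain ⟨X, hX⟩ := hspanV
  obtain ⟨Y, hY⟩ := hspanW
  have hdet : IsUnit (K σ).det := (Matrix.isUnit_iff_isUnit_det _).mp hK
  have hdetG : IsUnit (Wᴴ * K σ * V).det := (Matrix.isUnit_iff_isUnit_det _).mp hKr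
  set Ki := (K σ)⁻¹ with hKi
  set Gi := (Wᴴ * K σ * V)⁻¹ with hGi
  -- B σ = K σ * (V * X)
  have hBσ : B σ = K σ * (V * X) := by
    rw [← hX, Matrix.mul_nonsing_inv_cancel_left _ _ hdet]
  -- e1 : V * (Gi * (Wᴴ * B σ)) = Ki * B σ
  have hWB : Gi * (Wᴴ * B σ) = X := by
    rw [hBσ]
    calc Gi * (Wᴴ * (K σ * (V * X))) = Gi * ((Wᴴ * K σ * V) * X) := by
          rw [Matrix.mul_assoc, Matrix.mul_assoc]
      _ = X := Matrix.nonsing_inv_mul_cancel_left _ _ hdetG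
  have e1 : V * (Gi * (Wᴴ * B σ)) = Ki * B σ := by rw [hWB, ← hX]
  -- C σ * Ki = Yᴴ * Wᴴ
  have hCKi : C σ * Ki = Yᴴ * Wᴴ := by
    have := congrArg Matrix.conjTranspose hY
    simpa [Matrix.conjTranspose_mul, Matrix.conjTranspose_nonsing_inv] using this
  have hCσ : C σ = Yᴴ * Wᴴ * K σ := by
    rw [← hCKi, hKi, Matrix.nonsing_inv_mul_cancel_right _ _ hdet]
  have hCVGi : C σ * V * Gi = Yᴴ := by
    rw [hCσ]
    calc Yᴴ * Wᴴ * K σ * V * Gi = Yᴴ * ((Wᴴ * K σ * V) * Gi) := by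
          simp only [Matrix.mul_assoc]
      _ = Yᴴ := by rw [Matrix.mul_nonsing_inv _ hdetG, Matrix.mul_one]
  have e2 : ∀ (q : ℕ) (M : Matrix (Fin n) (Fin q) ℂ),
      C σ * (V * (Gi * (Wᴴ * M))) = C σ * (Ki * M) := by
    intro q M
    calc C σ * (V * (Gi * (Wᴴ * M))) = (C σ * V * Gi) * Wᴴ * M := by
          simp only [Matrix.mul_assoc]
      _ = (C σ * Ki) * M := by rw [hCVGi, hCKi]
      _ = C σ * (Ki * M) := by rw [Matrix.mul_assoc]
  constructor
  · simp only [Matrix.mul_assoc]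
    rw [e1]
  · -- derivative part
    intro i j
    set K' : Matrix (Fin n) (Fin n) ℂ :=
      Matrix.of (fun i j => deriv (fun s => K s i j) σ) with hK'
    set B' : Matrix (Fin n) (Fin m) ℂ :=
      Matrix.of (fun i j => deriv (fun s => B s i j) σ) with hB'
    set C' : Matrix (Fin p) (Fin n) ℂ :=
      Matrix.of (fun i j => deriv (fun s => C s i j) σ) with hC'
    have hKe : ∀ i j, HasDerivAt (fun s => K s i j) (K' i j) σ := fun i j => (hKd i j).hasDerivAt
    have hBe : ∀ i j, HasDerivAt (fun s => B s i j) (B' i j) σ := fun i j => (hBd i j).hasDerivAt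
    have hCe : ∀ i j, HasDerivAt (fun s => C s i j) (C' i j) σ := fun i j => (hCd i j).hasDerivAt
    have hKmat : HasDerivAt K K' σ := hasDerivAt_matrix hKe
    -- derivative of K⁻¹
    have hKinv : HasDerivAt (fun s => (K s)⁻¹) (-(Ki * K' * Ki)) σ := by
      have hu := hasFDerivAt_ringInverse (𝕜 := ℂ) hK.unit
      rw [hK.unit_spec] at hu
      have hcomp := hu.comp_hasDerivAt σ hKmat
      have : HasDerivAt (fun s => Ring.inverse (K s)) (-(Ki * K' * Ki)) σ := by
        convert hcomp using 1
        · rfl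
        · rfl
        · rfl
        · rfl
        simp [ContinuousLinearMap.mulLeftRight_apply, hKi, Matrix.coe_units_inv, hK.unit_spec]
      simpa only [← Matrix.nonsing_inv_eq_ringInverse] using this
    have hKinve : ∀ i j, HasDerivAt (fun s => (K s)⁻¹ i j) ((-(Ki * K' * Ki)) i j) σ :=
      fun i j => entry_hasDerivAt hKinv i j
    -- derivative of G = Wᴴ * K s * V and its inverse
    have hWce : ∀ i j, HasDerivAt (fun s => (Wᴴ : Matrix (Fin r) (Fin n) ℂ) i j)
        ((0 : Matrix (Fin r) (Fin n) ℂ) i j) σ := fun i j => hasDerivAt_const σ _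
    have hVce : ∀ i j, HasDerivAt (fun s => V i j) ((0 : Matrix (Fin n) (Fin r) ℂ) i j) σ :=
      fun i j => hasDerivAt_const σ _
    have hGe : ∀ i j, HasDerivAt (fun s => (Wᴴ * K s * V) i j)
        ((((0 : Matrix (Fin r) (Fin n) ℂ) * K σ + Wᴴ * K') * V + (Wᴴ * K σ) * (0 : Matrix (Fin n) (Fin r) ℂ)) i j) σ :=
      mul_entry_hasDerivAt (mul_entry_hasDerivAt hWce hKe) hVce
    set G' : Matrix (Fin r) (Fin r) ℂ := ((0 : Matrix (Fin r) (Fin n) ℂ) * K σ + Wᴴ * K') * V + (Wᴴ * K σ) * (0 : Matrix (Fin n) (Fin r) ℂ) with hG'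
    have hG'eq : G' = Wᴴ * K' * V := by
      simp [hG', Matrix.zero_mul, Matrix.mul_zero]
    have hGmat : HasDerivAt (fun s => Wᴴ * K s * V) G' σ := hasDerivAt_matrix hGe
    have hGinv : HasDerivAt (fun s => (Wᴴ * K s * V)⁻¹) (-(Gi * G' * Gi)) σ := by
      have hu := hasFDerivAt_ringInverse (𝕜 := ℂ) hKr.unit
      rw [hKr.unit_spec] at hu
      have hcomp := hu.comp_hasDerivAt σ hGmat
      have : HasDerivAt (fun s => Ring.inverse (Wᴴ * K s * V)) (-(Gi * G' * Gi)) σ := by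
        convert hcomp using 1
        · rfl
        · rfl
        · rfl
        · rfl
        simp [ContinuousLinearMap.mulLeftRight_apply, hGi, Matrix.coe_units_inv, hKr.unit_spec]
      simpa only [← Matrix.nonsing_inv_eq_ringInverse] using this
    have hGinve : ∀ i j, HasDerivAt (fun s => (Wᴴ * K s * V)⁻¹ i j) ((-(Gi * G' * Gi)) i j) σ :=
      fun i j => entry_hasDerivAt hGinv i j
    -- entry derivatives of the two transfer functions
    have hHfull : ∀ i j, HasDerivAt (fun s => (C s * (K s)⁻¹ * B s) i j)
        (((C' * Ki + C σ * (-(Ki * K' * Ki))) * B σ + (C σ * Ki) * B') i j) σ :=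
      mul_entry_hasDerivAt (mul_entry_hasDerivAt hCe hKinve) hBe
    have hHred : ∀ i j, HasDerivAt (fun s => (C s * V * (Wᴴ * K s * V)⁻¹ * Wᴴ * B s) i j)
        (((((C' * V + C σ * (0 : Matrix (Fin n) (Fin r) ℂ)) * Gi
                + (C σ * V) * (-(Gi * G' * Gi))) * Wᴴ
              + (C σ * V * Gi) * (0 : Matrix (Fin r) (Fin n) ℂ)) * B σ
            + (C σ * V * Gi * Wᴴ) * B') i j) σ :=
      mul_entry_hasDerivAt (mul_entry_hasDerivAt
        (mul_entry_hasDerivAt (mul_entry_hasDerivAt hCe hVce) hGinve) hWce) hBe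
    rw [(hHfull i j).deriv, (hHred i j).deriv]
    -- now an algebraic identity between the two derivative matrices
    rw [hG'eq]
    simp only [Matrix.add_mul, Matrix.mul_add, Matrix.neg_mul, Matrix.mul_neg,
      Matrix.zero_mul, Matrix.mul_zero, add_zero, zero_add,
      Matrix.mul_assoc, e1]
    rw [e2 m (K' * (Ki * B σ)), e2 m B']
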